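/- Let a, b, c ∈ ℂ. The ℂ-bilinear product ∘ on A defined on basis elements by L_m∘L_n = cL_{m+n+1} − (n+1)L_{m+n}, L_m∘W_n = ((a−2)(m+1)−(n+1))W_{m+n} + (b+c)W_{m+n+1}, W_m∘L_n = −(n+1)W_{m+n} + cW_{m+n+1} and W_m∘W_n = 0 is left-symmetric, and it is a compatible left-symmetric algebraic structure on the Lie algebra Coeff(W(a,b)). -/

import Mathlib

noncomputable section

/-- `A` is the free `ℂ`-vector space with basis `{L m : m ∈ ℤ} ∪ {W m : m ∈ ℤ}`. -/
abbrev A : Type := (ℤ ⊕ ℤ) →₀ ℂ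

/-- The basis vector `L m`. -/
def L (m : ℤ) : A := Finsupp.single (Sum.inl m) 1

/-- The basis vector `W m`. -/
def W (m : ℤ) : A := Finsupp.single (Sum.inr m) 1

private lemma eq_zero_of_basisLW {V : Type*} [AddCommGroup V] [Module ℂ V] (f : A →ₗ[ℂ] V)
    (hL : ∀ m, f (L m) = 0) (hW : ∀ m, f (W m) = 0) : f = 0 :=
  Finsupp.basisSingleOne.ext fun i => by
    rcases i with m | m
    · simpa [Finsupp.coe_basisSingleOne, L] using hL m
    · simpa [Finsupp.coe_basisSingleOne, W] using hW m

/-- Basis indexing function. -/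
private def bs : ℤ ⊕ ℤ → A := Sum.elim L W

private lemma leftsym_of_basis (M : A →ₗ[ℂ] A →ₗ[ℂ] A)
    (h : ∀ i j k : ℤ ⊕ ℤ,
      M (M (bs i) (bs j)) (bs k) - M (bs i) (M (bs j) (bs k))
        - M (M (bs j) (bs i)) (bs k) + M (bs j) (M (bs i) (bs k)) = 0) :
    ∀ x y z : A, M (M x y) z - M x (M y z) - M (M y x) z + M y (M x z) = 0 := by
  have hx : ∀ y z : A,
      (∀ m, M (M (L m) y) z - M (L m) (M y z) - M (M y (L m)) z + M y (M (L m) z) = 0) →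
      (∀ m, M (M (W m) y) z - M (W m) (M y z) - M (M y (W m)) z + M y (M (W m) z) = 0) →
      ∀ x, M (M x y) z - M x (M y z) - M (M y x) z + M y (M x z) = 0 := by
    intro y z hL' hW' x
    have h0 : ((M.flip z).comp (M.flip y) - M.flip (M y z)
        - (M.flip z).comp (M y) + (M y).comp (M.flip z)) = 0 :=
      eq_zero_of_basisLW _ (fun m => by simpa [LinearMap.flip_apply] using hL' m)
        (fun m => by simpa [LinearMap.flip_apply] using hW' m)
    simpa [LinearMap.flip_apply] using LinearMap.congr_fun h0 x
  have hy : ∀ (x z : A),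
      (∀ n, M (M x (L n)) z - M x (M (L n) z) - M (M (L n) x) z + M (L n) (M x z) = 0) →
      (∀ n, M (M x (W n)) z - M x (M (W n) z) - M (M (W n) x) z + M (W n) (M x z) = 0) →
      ∀ y, M (M x y) z - M x (M y z) - M (M y x) z + M y (M x z) = 0 := by
    intro x z hL' hW' y
    have h0 : ((M.flip z).comp (M x) - (M x).comp (M.flip z)
        - (M.flip z).comp (M.flip x) + M.flip (M x z)) = 0 :=
      eq_zero_of_basisLW _ (fun n => by simpa [LinearMap.flip_apply] using hL' n)
        (fun n => by simpa [LinearMap.flip_apply] using hW' n)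
    simpa [LinearMap.flip_apply] using LinearMap.congr_fun h0 y
  have hz : ∀ (x y : A),
      (∀ p, M (M x y) (L p) - M x (M y (L p)) - M (M y x) (L p) + M y (M x (L p)) = 0) →
      (∀ p, M (M x y) (W p) - M x (M y (W p)) - M (M y x) (W p) + M y (M x (W p)) = 0) →
      ∀ z, M (M x y) z - M x (M y z) - M (M y x) z + M y (M x z) = 0 := by
    intro x y hL' hW' z
    have h0 : (M (M x y) - (M x).comp (M y) - M (M y x) + (M y).comp (M x)) = 0 :=
      eq_zero_of_basisLW _ (fun p => by simpa using hL' p) (fun p => by simpa using hW' p)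
    simpa using LinearMap.congr_fun h0 z
  have s1 : ∀ (i j : ℤ ⊕ ℤ) (z : A), M (M (bs i) (bs j)) z - M (bs i) (M (bs j) z)
      - M (M (bs j) (bs i)) z + M (bs j) (M (bs i) z) = 0 :=
    fun i j => hz (bs i) (bs j) (fun p => h i j (.inl p)) (fun p => h i j (.inr p))
  have s2 : ∀ (i : ℤ ⊕ ℤ) (y z : A), M (M (bs i) y) z - M (bs i) (M y z)
      - M (M y (bs i)) z + M y (M (bs i) z) = 0 :=
    fun i y z => hy (bs i) z (fun n => s1 i (.inl n) z) (fun n => s1 i (.inr n) z) y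
  exact fun x y z => hx y z (fun m => s2 (.inl m) y z) (fun m => s2 (.inr m) y z) x

private lemma compat_of_basis (M B : A →ₗ[ℂ] A →ₗ[ℂ] A)
    (h : ∀ i j : ℤ ⊕ ℤ, M (bs i) (bs j) - M (bs j) (bs i) - B (bs i) (bs j) = 0) :
    ∀ x y : A, M x y - M y x - B x y = 0 := by
  have hx : ∀ y : A,
      (∀ m, M (L m) y - M y (L m) - B (L m) y = 0) →
      (∀ m, M (W m) y - M y (W m) - B (W m) y = 0) →
      ∀ x, M x y - M y x - B x y = 0 := by
    intro y hL' hW' x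
    have h0 : (M.flip y - M y - B.flip y) = 0 :=
      eq_zero_of_basisLW _ (fun m => by simpa [LinearMap.flip_apply] using hL' m)
        (fun m => by simpa [LinearMap.flip_apply] using hW' m)
    simpa [LinearMap.flip_apply] using LinearMap.congr_fun h0 x
  have hy : ∀ x : A,
      (∀ n, M x (L n) - M (L n) x - B x (L n) = 0) →
      (∀ n, M x (W n) - M (W n) x - B x (W n) = 0) →
      ∀ y, M x y - M y x - B x y = 0 := by
    intro x hL' hW' y
    have h0 : (M x - M.flip x - B x) = 0 :=
      eq_zero_of_basisLW _ (fun n => by simpa [LinearMap.flip_apply] using hL' n)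
        (fun n => by simpa [LinearMap.flip_apply] using hW' n)
    simpa [LinearMap.flip_apply] using LinearMap.congr_fun h0 y
  have s1 : ∀ (i : ℤ ⊕ ℤ) (y : A), M (bs i) y - M y (bs i) - B (bs i) y = 0 :=
    fun i => hy (bs i) (fun n => h i (.inl n)) (fun n => h i (.inr n))
  exact fun x y => hx y (fun m => s1 (.inl m) y) (fun m => s1 (.inr m) y) x

/-- Corollary 3.8 (3). -/
theorem stmt14 (a b c : ℂ)
    -- `M` is the ℂ-bilinear product `∘` given on basis elements by:
    (M : A →ₗ[ℂ] A →ₗ[ℂ] A)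
    (hLL : ∀ m n : ℤ, M (L m) (L n) = c • L (m + n + 1) - ((n : ℂ) + 1) • L (m + n))
    (hLW : ∀ m n : ℤ, M (L m) (W n) =
      ((a - 2) * ((m : ℂ) + 1) - ((n : ℂ) + 1)) • W (m + n) + (b + c) • W (m + n + 1))
    (hWL : ∀ m n : ℤ, M (W m) (L n) = -((n : ℂ) + 1) • W (m + n) + c • W (m + n + 1))
    (hWW : ∀ m n : ℤ, M (W m) (W n) = 0)
    -- `B` is the ℂ-bilinear Lie bracket of Coeff(W(a,b)) on basis elements:
    (B : A →ₗ[ℂ] A →ₗ[ℂ] A)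
    (hBLL : ∀ m n : ℤ, B (L m) (L n) = ((m : ℂ) - (n : ℂ)) • L (m + n))
    (hBLW : ∀ m n : ℤ, B (L m) (W n) =
      (((m : ℂ) + 1) * (a - 1) - ((n : ℂ) + 1)) • W (m + n)
        + b • W (m + n + 1))
    (hBWL : ∀ m n : ℤ, B (W n) (L m) = -B (L m) (W n))
    (hBWW : ∀ m n : ℤ, B (W m) (W n) = 0) :
    -- `∘ = M` is left-symmetric:
    ((∀ x y z : A, M (M x y) z - M x (M y z) = M (M y x) z - M y (M x z)) ∧
    -- and compatible with the Lie bracket: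
    (∀ x y : A, M x y - M y x = B x y)) := by
  constructor
  · have key := leftsym_of_basis M ?_
    · intro x y z
      have h := key x y z
      rw [← sub_eq_zero]
      abel_nf at h ⊢
      exact h
    · rintro (m | m) (n | n) (p | p) <;>
        simp only [bs, Sum.elim_inl, Sum.elim_inr] <;>
        simp only [hLL, hLW, hWL, hWW, map_sub, map_smul, map_add, map_neg, map_zero,
          LinearMap.sub_apply, LinearMap.add_apply, LinearMap.smul_apply, LinearMap.neg_apply,
          LinearMap.zero_apply, smul_sub, smul_add, smul_smul, smul_zero, neg_smul,
          smul_neg] <;>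
        push_cast <;> ring_nf (config := { ifUnchanged := .silent }) <;> module
  · have key := compat_of_basis M B ?_
    · intro x y
      have h := key x y
      rw [← sub_eq_zero]
      abel_nf at h ⊢
      exact h
    · rintro (m | m) (n | n) <;>
        simp only [bs, Sum.elim_inl, Sum.elim_inr] <;>
        simp only [hLL, hLW, hWL, hWW, hBLL, hBLW, hBWL, hBWW, map_sub, map_smul, map_add,
          map_neg, map_zero, LinearMap.sub_apply, LinearMap.add_apply, LinearMap.smul_apply,
          LinearMap.neg_apply, LinearMap.zero_apply, smul_sub, smul_add, smul_smul, smul_zero,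
          neg_smul, smul_neg, neg_neg, neg_add] <;>
        push_cast <;> ring_nf (config := { ifUnchanged := .silent }) <;> module
  done

end
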